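/- arXiv:2404.12012 — 2 statements merged into one kernel-verified Lean document; each statement's English description precedes it below -/
import Mathlib

section
/- The sequence h_n of unique solutions in (0,1) to ∑_{k=1}^{n} (1/(k(k+1)))^{h_n} = 1 is strictly increasing in n and converges to 1 as n → ∞. -/
open Finset

private lemma base_pos {k : ℕ} (hk : 1 ≤ k) : 0 < 1 / ((k:ℝ) * ((k:ℝ) + 1)) := by
  have h0 : (0:ℝ) < k := by exact_mod_cast hk
  positivity

private lemma base_le_half {k : ℕ} (hk : 1 ≤ k) : 1 / ((k:ℝ) * ((k:ℝ) + 1)) ≤ 1/2 := by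
  have h1 : (1:ℝ) ≤ k := by exact_mod_cast hk
  rw [div_le_div_iff₀ (by nlinarith) (by norm_num)]
  nlinarith

private lemma pow_mono {k : ℕ} (hk : 1 ≤ k) {x y : ℝ} (hxy : x ≤ y) :
    (1 / ((k:ℝ) * ((k:ℝ) + 1))) ^ y ≤ (1 / ((k:ℝ) * ((k:ℝ) + 1))) ^ x :=
  Real.rpow_le_rpow_of_exponent_ge (base_pos hk)
    (le_trans (base_le_half hk) (by norm_num)) hxy

private lemma telesum (n : ℕ) :
    ∑ k ∈ Finset.Icc 1 n, 1 / ((k:ℝ) * ((k:ℝ) + 1)) = 1 - 1/((n:ℝ)+1) := by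
  induction n with
  | zero => simp
  | succ m ih =>
    rw [Finset.sum_Icc_succ_top (by omega), ih]
    have h0 : ((m:ℝ)+1) ≠ 0 := by positivity
    have h1 : ((m:ℝ)+1+1) ≠ 0 := by positivity
    push_cast
    field_simp
    ring

theorem stmt_4 (h : ℕ → ℝ)
    (hmem : ∀ n : ℕ, 2 ≤ n → h n ∈ Set.Ioo (0:ℝ) 1)
    (heq : ∀ n : ℕ, 2 ≤ n →
      ∑ k ∈ Finset.Icc 1 n, ((1 / ((k:ℝ) * ((k:ℝ) + 1))) ^ (h n)) = 1) :
    (∀ n : ℕ, 2 ≤ n → h n < h (n + 1)) ∧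
    Filter.Tendsto h Filter.atTop (nhds 1) := by
  constructor
  · -- strict monotonicity
    intro n hn
    by_contra hcon
    push_neg at hcon
    -- then each term with exponent h n is ≤ term with exponent h (n+1)
    have hsum_le : ∑ k ∈ Finset.Icc 1 (n+1), (1 / ((k:ℝ) * ((k:ℝ) + 1))) ^ (h n)
        ≤ ∑ k ∈ Finset.Icc 1 (n+1), (1 / ((k:ℝ) * ((k:ℝ) + 1))) ^ (h (n+1)) := by
      apply Finset.sum_le_sum
      intro k hk
      exact pow_mono (Finset.mem_Icc.mp hk).1 hcon
    rw [heq (n+1) (by omega)] at hsum_le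
    have hsplit : ∑ k ∈ Finset.Icc 1 (n+1), (1 / ((k:ℝ) * ((k:ℝ) + 1))) ^ (h n)
        = (∑ k ∈ Finset.Icc 1 n, (1 / ((k:ℝ) * ((k:ℝ) + 1))) ^ (h n))
          + (1 / (((n+1:ℕ):ℝ) * (((n+1:ℕ):ℝ) + 1))) ^ (h n) := by
      rw [Finset.sum_Icc_succ_top (by omega)]
    have hpos : 0 < (1 / (((n+1:ℕ):ℝ) * (((n+1:ℕ):ℝ) + 1))) ^ (h n) :=
      Real.rpow_pos_of_pos (base_pos (by omega)) _
    rw [hsplit, heq n hn] at hsum_le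
    linarith
  · -- convergence to 1
    rw [tendsto_order]
    constructor
    · intro c hc
      -- δ := (1/2)^c - 1/2 > 0
      have hδ : (1/2:ℝ) < (1/2:ℝ) ^ c := by
        calc (1/2:ℝ) = (1/2:ℝ) ^ (1:ℝ) := (Real.rpow_one _).symm
        _ < (1/2:ℝ) ^ c := Real.rpow_lt_rpow_of_exponent_gt (by norm_num) (by norm_num) hc
      set δ := (1/2:ℝ) ^ c - 1/2 with hδdef
      have hδpos : 0 < δ := by simp [hδdef]; linarith
      obtain ⟨N, hN⟩ := exists_nat_gt (1/δ)
      rw [Filter.eventually_atTop]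
      refine ⟨max N 2, fun n hn => ?_⟩
      have hn2 : 2 ≤ n := le_trans (le_max_right _ _) hn
      have hnN : N ≤ n := le_trans (le_max_left _ _) hn
      by_contra hcon
      push_neg at hcon
      -- ∑ a_k^c ≤ ∑ a_k^{h n} = 1
      have h1 : ∑ k ∈ Finset.Icc 1 n, (1 / ((k:ℝ) * ((k:ℝ) + 1))) ^ c
          ≤ 1 := by
        calc ∑ k ∈ Finset.Icc 1 n, (1 / ((k:ℝ) * ((k:ℝ) + 1))) ^ c
            ≤ ∑ k ∈ Finset.Icc 1 n, (1 / ((k:ℝ) * ((k:ℝ) + 1))) ^ (h n) :=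
              Finset.sum_le_sum fun k hk => pow_mono (Finset.mem_Icc.mp hk).1 hcon
          _ = 1 := heq n hn2
      -- lower bound: ∑ a_k^c ≥ ∑ a_k + δ = 1 - 1/(n+1) + δ
      have h2 : (1 - 1/((n:ℝ)+1)) + δ
          ≤ ∑ k ∈ Finset.Icc 1 n, (1 / ((k:ℝ) * ((k:ℝ) + 1))) ^ c := by
        have hdiff : δ ≤ ∑ k ∈ Finset.Icc 1 n,
            ((1 / ((k:ℝ) * ((k:ℝ) + 1))) ^ c - 1 / ((k:ℝ) * ((k:ℝ) + 1))) := by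
          have h1mem : (1:ℕ) ∈ Finset.Icc 1 n := Finset.mem_Icc.mpr ⟨le_rfl, by omega⟩
          have := Finset.single_le_sum (f := fun k : ℕ =>
              (1 / ((k:ℝ) * ((k:ℝ) + 1))) ^ c - 1 / ((k:ℝ) * ((k:ℝ) + 1)))
            (fun k hk => by
              have hk1 := (Finset.mem_Icc.mp hk).1
              have := pow_mono (x := c) (y := 1) hk1 (le_of_lt hc)
              rw [Real.rpow_one] at this
              linarith) h1mem
          refine le_trans (le_of_eq ?_) this
          norm_num [hδdef]
        have hts := telesum n
        have : ∑ k ∈ Finset.Icc 1 n,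
            ((1 / ((k:ℝ) * ((k:ℝ) + 1))) ^ c - 1 / ((k:ℝ) * ((k:ℝ) + 1)))
            = (∑ k ∈ Finset.Icc 1 n, (1 / ((k:ℝ) * ((k:ℝ) + 1))) ^ c)
              - ∑ k ∈ Finset.Icc 1 n, 1 / ((k:ℝ) * ((k:ℝ) + 1)) :=
          Finset.sum_sub_distrib _ _
        rw [this, hts] at hdiff
        linarith
      -- but 1/(n+1) < δ
      have h3 : 1/((n:ℝ)+1) < δ := by
        have hNpos : 0 < (N:ℝ) := lt_of_le_of_lt (by positivity) hN
        have hn1 : (N:ℝ) ≤ (n:ℝ) := by exact_mod_cast hnN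
        have : 1/δ < (n:ℝ) + 1 := by linarith
        rw [div_lt_iff₀ (by positivity)] at this ⊢
        nlinarith
      linarith
    · intro b hb
      rw [Filter.eventually_atTop]
      exact ⟨2, fun n hn => lt_trans (hmem n hn).2 hb⟩
end

section
/- Let h ∈ (0,1), n ≥ 2, and define weights p_k = (1/(k(k+1)))^h for k = 1,...,n with ∑_{k=1}^n p_k = 1. For the Bernoulli measure m on the attractor J_n determined by these weights (pushed to [0,1] via the coding by the maps g_k), there exists a constant C = C(n) > 0 such that C⁻¹ r^h ≤ m(B(x,r)) ≤ C r^h for all x ∈ J_n and 0 < r ≤ 1. -/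
open MeasureTheory
noncomputable section S18

def s18rho (k : ℕ) : ℝ := 1 / ((k:ℝ) * ((k:ℝ) + 1))
def s18g (k : ℕ) (x : ℝ) : ℝ := (1 / ((k:ℝ) + 1) - 1 / (k:ℝ)) * x + 1 / (k:ℝ)

lemma s18rho_pos {k : ℕ} (hk : 1 ≤ k) : 0 < s18rho k := by
  have : (1:ℝ) ≤ (k:ℝ) := by exact_mod_cast hk
  unfold s18rho; positivity

lemma s18rho_le_half {k : ℕ} (hk : 1 ≤ k) : s18rho k ≤ 1 / 2 := by
  have h1 : (1:ℝ) ≤ (k:ℝ) := by exact_mod_cast hk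
  unfold s18rho
  rw [div_le_div_iff₀ (by nlinarith) (by norm_num)]
  nlinarith

lemma s18rho_anti {k l : ℕ} (hk : 1 ≤ k) (hkl : k ≤ l) : s18rho l ≤ s18rho k := by
  have h1 : (1:ℝ) ≤ (k:ℝ) := by exact_mod_cast hk
  have h2 : (k:ℝ) ≤ (l:ℝ) := by exact_mod_cast hkl
  unfold s18rho
  apply div_le_div_of_nonneg_left (by norm_num) (by nlinarith) (by nlinarith)

lemma s18g_eq {k : ℕ} (hk : 1 ≤ k) (x : ℝ) :
    s18g k x = 1 / (k:ℝ) - s18rho k * x := by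
  have h1 : (1:ℝ) ≤ (k:ℝ) := by exact_mod_cast hk
  have h0 : (k:ℝ) ≠ 0 := by linarith
  have h0' : (k:ℝ) + 1 ≠ 0 := by linarith
  unfold s18g s18rho
  field_simp
  ring

lemma s18_image_affine_Icc {c d a b : ℝ} (hc : c < 0) :
    (fun x => c * x + d) '' Set.Icc a b = Set.Icc (c * b + d) (c * a + d) := by
  ext y
  simp only [Set.mem_image, Set.mem_Icc]
  constructor
  · rintro ⟨x, ⟨h1, h2⟩, rfl⟩
    constructor <;> nlinarith
  · rintro ⟨h1, h2⟩
    have hc0 : c ≠ 0 := ne_of_lt hc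
    refine ⟨(y - d) / c, ⟨?_, ?_⟩, ?_⟩
    · rw [le_div_iff_of_neg hc]; linarith
    · rw [div_le_iff_of_neg hc]; linarith
    · field_simp; ring

lemma s18g_image_Icc {k : ℕ} (hk : 1 ≤ k) (a b : ℝ) :
    s18g k '' Set.Icc a b = Set.Icc (s18g k b) (s18g k a) := by
  have h1 : (1:ℝ) ≤ (k:ℝ) := by exact_mod_cast hk
  have hneg : 1 / ((k:ℝ) + 1) - 1 / (k:ℝ) < 0 := by
    rw [sub_neg]
    apply div_lt_div_of_pos_left one_pos (by linarith) (by linarith)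
  unfold s18g
  exact s18_image_affine_Icc hneg

def s18gW : List ℕ → ℝ → ℝ
  | [] => id
  | (k :: w) => s18g k ∘ s18gW w

def s18L (w : List ℕ) : ℝ := (w.map s18rho).prod

def s18cyl (w : List ℕ) : Set ℝ := s18gW w '' Set.Icc 0 1

@[simp] lemma s18L_nil : s18L [] = 1 := by simp [s18L]
@[simp] lemma s18L_cons (k : ℕ) (w : List ℕ) : s18L (k :: w) = s18rho k * s18L w := by
  simp [s18L]

@[simp] lemma s18cyl_nil : s18cyl [] = Set.Icc 0 1 := by simp [s18cyl, s18gW]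

lemma s18cyl_cons (k : ℕ) (w : List ℕ) : s18cyl (k :: w) = s18g k '' s18cyl w := by
  rw [s18cyl, s18cyl, s18gW, Set.image_comp]

def s18valid (n : ℕ) (w : List ℕ) : Prop := ∀ k ∈ w, 1 ≤ k ∧ k ≤ n

lemma s18valid_cons {n k : ℕ} {w : List ℕ} (h : s18valid n (k :: w)) :
    (1 ≤ k ∧ k ≤ n) ∧ s18valid n w :=
  ⟨h k (List.mem_cons_self), fun j hj => h j (List.mem_cons_of_mem k hj)⟩

lemma s18L_pos {n : ℕ} {w : List ℕ} (hw : s18valid n w) : 0 < s18L w := by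
  induction w with
  | nil => simp
  | cons k w ih =>
    obtain ⟨⟨hk1, _⟩, hw'⟩ := s18valid_cons hw
    simpa using mul_pos (s18rho_pos hk1) (ih hw')

lemma s18L_le_one {n : ℕ} {w : List ℕ} (hw : s18valid n w) : s18L w ≤ 1 := by
  induction w with
  | nil => simp
  | cons k w ih =>
    obtain ⟨⟨hk1, _⟩, hw'⟩ := s18valid_cons hw
    have h1 := s18rho_pos hk1
    have h2 := s18rho_le_half hk1
    have h3 := s18L_pos hw'
    have h4 := ih hw'
    simp only [s18L_cons]
    nlinarith

lemma s18cyl_struct {n : ℕ} {w : List ℕ} (hw : s18valid n w) :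
    ∃ a b : ℝ, s18cyl w = Set.Icc a b ∧ b - a = s18L w ∧ 0 ≤ a ∧ b ≤ 1 := by
  induction w with
  | nil => exact ⟨0, 1, by simp, by simp, le_refl _, le_refl _⟩
  | cons k w ih =>
    obtain ⟨⟨hk1, _⟩, hw'⟩ := s18valid_cons hw
    obtain ⟨a, b, hcyl, hlen, ha, hb⟩ := ih hw'
    have hk1' : (1:ℝ) ≤ (k:ℝ) := by exact_mod_cast hk1
    have hρ := s18rho_pos hk1
    refine ⟨s18g k b, s18g k a, ?_, ?_, ?_, ?_⟩
    · rw [s18cyl_cons, hcyl, s18g_image_Icc hk1]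
    · rw [s18g_eq hk1, s18g_eq hk1, s18L_cons, ← hlen]; ring
    · rw [s18g_eq hk1]
      have hρk : s18rho k * b ≤ s18rho k * 1 := by nlinarith
      have : s18rho k ≤ 1 / (k:ℝ) := by
        unfold s18rho
        apply div_le_div_of_nonneg_left one_pos.le (by linarith) (by nlinarith)
      nlinarith
    · rw [s18g_eq hk1]
      have h1k : 1 / (k:ℝ) ≤ 1 := by
        rw [div_le_one (by linarith)]; exact hk1'
      nlinarith

lemma s18cyl_subset_unit {n : ℕ} {w : List ℕ} (hw : s18valid n w) :
    s18cyl w ⊆ Set.Icc 0 1 := by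
  obtain ⟨a, b, hcyl, _, ha, hb⟩ := s18cyl_struct hw
  rw [hcyl]
  exact Set.Icc_subset_Icc ha hb

end S18
-- appended after comb content (section S18 still open conceptually)
open Classical in
noncomputable def s18stop (n : ℕ) : ℕ → ℝ → Finset (List ℕ)
  | 0, _ => {[]}
  | (N+1), r =>
      if 1 ≤ r then {[]}
      else (Finset.Icc 1 n).biUnion (fun k => (s18stop n N (r / s18rho k)).image (fun w => k :: w))

lemma s18stop_of_one_le (n N : ℕ) {r : ℝ} (hr : 1 ≤ r) : s18stop n N r = {[]} := by
  cases N with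
  | zero => rfl
  | succ N => simp [s18stop, hr]

lemma s18stop_succ_of_lt (n N : ℕ) {r : ℝ} (hr : r < 1) :
    s18stop n (N+1) r
      = (Finset.Icc 1 n).biUnion (fun k => (s18stop n N (r / s18rho k)).image (fun w => k :: w)) := by
  simp [s18stop, not_le.mpr hr]

lemma s18stop_valid (n : ℕ) : ∀ N : ℕ, ∀ r : ℝ, ∀ w ∈ s18stop n N r, s18valid n w := by
  intro N
  induction N with
  | zero =>
    intro r w hw
    simp only [s18stop, Finset.mem_singleton] at hw
    subst hw; intro k hk; simp at hk
  | succ N ih =>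
    intro r w hw
    by_cases hr : 1 ≤ r
    · rw [s18stop_of_one_le n _ hr] at hw
      simp only [Finset.mem_singleton] at hw
      subst hw; intro k hk; simp at hk
    · rw [s18stop_succ_of_lt n N (not_le.mp hr)] at hw
      simp only [Finset.mem_biUnion, Finset.mem_image, Finset.mem_Icc] at hw
      obtain ⟨k, hk, w', hw', rfl⟩ := hw
      intro j hj
      rcases List.mem_cons.mp hj with rfl | hj
      · exact hk
      · exact ih _ w' hw' j hj

lemma s18stop_cover {n : ℕ} (hn : 2 ≤ n) {J : Set ℝ} (hsub : J ⊆ Set.Icc 0 1)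
    (hinv : J = ⋃ k ∈ Finset.Icc 1 n, s18g k '' J) :
    ∀ N : ℕ, ∀ r : ℝ, 0 < r → (1/2)^N ≤ r → J ⊆ ⋃ w ∈ s18stop n N r, s18cyl w := by
  intro N
  induction N with
  | zero =>
    intro r _ _
    simp only [s18stop, Finset.mem_singleton]
    intro x hx
    simp only [Set.mem_iUnion]
    exact ⟨[], rfl, by simpa using hsub hx⟩
  | succ N ih =>
    intro r hr hrN
    by_cases hr1 : 1 ≤ r
    · rw [s18stop_of_one_le n _ hr1]
      intro x hx
      simp only [Finset.mem_singleton, Set.mem_iUnion]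
      exact ⟨[], rfl, by simpa using hsub hx⟩
    · rw [s18stop_succ_of_lt n N (not_le.mp hr1)]
      intro x hx
      rw [hinv] at hx
      simp only [Set.mem_iUnion] at hx
      obtain ⟨k, hk, y, hy, hxy⟩ := hx
      have hk' := Finset.mem_Icc.mp hk
      have hρpos := s18rho_pos hk'.1
      have hρhalf := s18rho_le_half hk'.1
      have hr' : 0 < r / s18rho k := div_pos hr hρpos
      have hrN' : (1/2)^N ≤ r / s18rho k := by
        rw [le_div_iff₀ hρpos]
        have : (1/2:ℝ)^N * s18rho k ≤ (1/2)^N * (1/2) := by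
          apply mul_le_mul_of_nonneg_left hρhalf (by positivity)
        calc (1/2:ℝ)^N * s18rho k ≤ (1/2)^N * (1/2) := this
          _ = (1/2)^(N+1) := by ring
          _ ≤ r := hrN
      have hy2 := ih (r / s18rho k) hr' hrN' hy
      simp only [Set.mem_iUnion] at hy2
      obtain ⟨w', hw', hyw⟩ := hy2
      simp only [Set.mem_iUnion]
      refine ⟨k :: w', ?_, ?_⟩
      · simp only [Finset.mem_biUnion, Finset.mem_image]
        exact ⟨k, hk, w', hw', rfl⟩
      · rw [s18cyl_cons]
        exact ⟨y, hyw, hxy⟩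

lemma s18stop_L_lower {n : ℕ} (hn : 2 ≤ n) :
    ∀ N : ℕ, ∀ r : ℝ, 0 < r → s18rho n * r ≤ 1 →
      ∀ w ∈ s18stop n N r, s18rho n * r ≤ s18L w := by
  have hn1 : 1 ≤ n := le_trans (by norm_num) hn
  intro N
  induction N with
  | zero =>
    intro r hr hr1 w hw
    simp only [s18stop, Finset.mem_singleton] at hw
    subst hw; simpa using hr1
  | succ N ih =>
    intro r hr hr1 w hw
    by_cases hrone : 1 ≤ r
    · rw [s18stop_of_one_le n _ hrone] at hw
      simp only [Finset.mem_singleton] at hw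
      subst hw; simpa using hr1
    · rw [s18stop_succ_of_lt n N (not_le.mp hrone)] at hw
      simp only [Finset.mem_biUnion, Finset.mem_image, Finset.mem_Icc] at hw
      obtain ⟨k, hk, w', hw', rfl⟩ := hw
      have hρpos := s18rho_pos hk.1
      have hρn : s18rho n ≤ s18rho k := s18rho_anti hk.1 hk.2
      have hρnpos := s18rho_pos hn1
      have hr' : 0 < r / s18rho k := div_pos hr hρpos
      have hr1' : s18rho n * (r / s18rho k) ≤ 1 := by
        rw [← mul_div_assoc, div_le_one hρpos]
        have hrlt := not_le.mp hrone
        nlinarith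
      have := ih (r / s18rho k) hr' hr1' w' hw'
      rw [s18L_cons]
      calc s18rho n * r = s18rho k * (s18rho n * (r / s18rho k)) := by
            field_simp
        _ ≤ s18rho k * s18L w' := by nlinarith
lemma s18stop_L_upper {n : ℕ} (hn : 2 ≤ n) :
    ∀ N : ℕ, ∀ r : ℝ, 0 < r → (1/2)^N ≤ r → r ≤ 1 →
      ∀ w ∈ s18stop n N r, s18L w ≤ r := by
  intro N
  induction N with
  | zero =>
    intro r hr hrN hr1 w hw
    simp only [s18stop, Finset.mem_singleton] at hw
    subst hw
    simpa using le_trans (by norm_num : (1:ℝ) ≤ (1/2:ℝ)^(0:ℕ)) hrN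
  | succ N ih =>
    intro r hr hrN hr1 w hw
    by_cases hrone : 1 ≤ r
    · rw [s18stop_of_one_le n _ hrone] at hw
      simp only [Finset.mem_singleton] at hw
      subst hw; simpa using le_antisymm hr1 hrone ▸ hrone
    · rw [s18stop_succ_of_lt n N (not_le.mp hrone)] at hw
      simp only [Finset.mem_biUnion, Finset.mem_image, Finset.mem_Icc] at hw
      obtain ⟨k, hk, w', hw', rfl⟩ := hw
      have hρpos := s18rho_pos hk.1
      have hρhalf := s18rho_le_half hk.1
      have hr' : 0 < r / s18rho k := div_pos hr hρpos
      by_cases hc : r / s18rho k ≤ 1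
      · have hrN' : (1/2)^N ≤ r / s18rho k := by
          rw [le_div_iff₀ hρpos]
          calc (1/2:ℝ)^N * s18rho k ≤ (1/2)^N * (1/2) := by
                apply mul_le_mul_of_nonneg_left hρhalf (by positivity)
            _ = (1/2)^(N+1) := by ring
            _ ≤ r := hrN
        have := ih (r / s18rho k) hr' hrN' hc w' hw'
        rw [s18L_cons]
        calc s18rho k * s18L w' ≤ s18rho k * (r / s18rho k) := by nlinarith
          _ = r := by field_simp
      · have h1 : (1:ℝ) ≤ r / s18rho k := le_of_not_ge hc
        rw [s18stop_of_one_le n N h1] at hw'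
        simp only [Finset.mem_singleton] at hw'
        subst hw'
        simp only [s18L_cons, s18L_nil, mul_one]
        rw [le_div_iff₀ hρpos] at h1
        linarith [h1]

lemma s18stop_disj {n : ℕ} (hn : 2 ≤ n) :
    ∀ N : ℕ, ∀ r : ℝ, ∀ w ∈ s18stop n N r, ∀ v ∈ s18stop n N r, w ≠ v →
      Set.Subsingleton (s18cyl w ∩ s18cyl v) := by
  intro N
  induction N with
  | zero =>
    intro r w hw v hv hwv
    simp only [s18stop, Finset.mem_singleton] at hw hv
    exact absurd (hw.trans hv.symm) hwv
  | succ N ih =>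
    intro r w hw v hv hwv
    by_cases hrone : 1 ≤ r
    · rw [s18stop_of_one_le n _ hrone] at hw hv
      simp only [Finset.mem_singleton] at hw hv
      exact absurd (hw.trans hv.symm) hwv
    · rw [s18stop_succ_of_lt n N (not_le.mp hrone)] at hw hv
      simp only [Finset.mem_biUnion, Finset.mem_image, Finset.mem_Icc] at hw hv
      obtain ⟨k, hk, w', hw', rfl⟩ := hw
      obtain ⟨j, hj, v', hv', rfl⟩ := hv
      by_cases hkj : k = j
      · subst hkj
        have hwv' : w' ≠ v' := fun hh => hwv (by rw [hh])
        have hsub := ih (r / s18rho k) w' hw' v' hv' hwv'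
        rw [s18cyl_cons, s18cyl_cons]
        have hinj : Function.Injective (s18g k) := by
          intro x y hxy
          have hρ := s18rho_pos hk.1
          rw [s18g_eq hk.1, s18g_eq hk.1] at hxy
          have : s18rho k * x = s18rho k * y := by linarith
          exact mul_left_cancel₀ (ne_of_gt hρ) this
        rw [← Set.image_inter hinj]
        exact hsub.image _
      · -- different first letters: cylinders lie in different level-1 intervals
        have hwk : s18cyl (k :: w') ⊆ Set.Icc (s18g k 1) (s18g k 0) := by
          rw [s18cyl_cons, ← s18g_image_Icc hk.1 0 1]
          exact Set.image_mono (s18cyl_subset_unit (s18stop_valid n N _ w' hw'))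
        have hvj : s18cyl (j :: v') ⊆ Set.Icc (s18g j 1) (s18g j 0) := by
          rw [s18cyl_cons, ← s18g_image_Icc hj.1 0 1]
          exact Set.image_mono (s18cyl_subset_unit (s18stop_valid n N _ v' hv'))
        intro x hx y hy
        have hxk := hwk hx.1; have hxj := hvj hx.2
        have hyk := hwk hy.1; have hyj := hvj hy.2
        have hgk1 : s18g k 1 = 1 / ((k:ℝ)+1) := by unfold s18g; ring
        have hgk0 : s18g k 0 = 1 / (k:ℝ) := by unfold s18g; ring
        have hgj1 : s18g j 1 = 1 / ((j:ℝ)+1) := by unfold s18g; ring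
        have hgj0 : s18g j 0 = 1 / (j:ℝ) := by unfold s18g; ring
        rw [hgk1, hgk0] at hxk hyk
        rw [hgj1, hgj0] at hxj hyj
        -- wlog k < j
        rcases lt_or_gt_of_ne hkj with hlt | hlt
        · -- k < j so 1/j ≤ 1/(k+1); x,y ∈ [1/(k+1), 1/j]
          have hkR : (1:ℝ) ≤ (k:ℝ) := by exact_mod_cast hk.1
          have hjk : (k:ℝ) + 1 ≤ (j:ℝ) := by exact_mod_cast hlt
          have hb : (1:ℝ)/(j:ℝ) ≤ 1/((k:ℝ)+1) :=
            div_le_div_of_nonneg_left one_pos.le (by linarith) hjk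
          have hx1 := hxk.1; have hx2 := hxj.2
          have hy1 := hyk.1; have hy2 := hyj.2
          simp only [Set.mem_Icc] at *
          linarith
        · have hjR : (1:ℝ) ≤ (j:ℝ) := by exact_mod_cast hj.1
          have hkj' : (j:ℝ) + 1 ≤ (k:ℝ) := by exact_mod_cast hlt
          have hb : (1:ℝ)/(k:ℝ) ≤ 1/((j:ℝ)+1) :=
            div_le_div_of_nonneg_left one_pos.le (by linarith) hkj'
          have hx1 := hxj.1; have hx2 := hxk.2
          have hy1 := hyj.1; have hy2 := hyk.2
          simp only [Set.mem_Icc] at *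
          linarith
lemma s18m_cyl {n : ℕ} {h : ℝ} (hh : h ∈ Set.Ioo (0:ℝ) 1)
    {J : Set ℝ} (hsub : J ⊆ Set.Icc (0:ℝ) 1)
    (m : Measure ℝ) [IsProbabilityMeasure m] (hsupp : m J = 1)
    (hconf : ∀ A : Set ℝ, MeasurableSet A → A ⊆ Set.Icc (0:ℝ) 1 →
      ∀ k : ℕ, k ∈ Finset.Icc 1 n →
        m ((fun x : ℝ => (1 / ((k:ℝ) + 1) - 1 / (k:ℝ)) * x + 1 / (k:ℝ)) '' A)
          = ENNReal.ofReal ((1 / ((k:ℝ) * ((k:ℝ) + 1))) ^ h) * m A) :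
    ∀ w : List ℕ, s18valid n w → m (s18cyl w) = ENNReal.ofReal (s18L w ^ h) := by
  have h01 : m (Set.Icc (0:ℝ) 1) = 1 :=
    le_antisymm prob_le_one (hsupp ▸ measure_mono hsub)
  intro w hw
  induction w with
  | nil => simp [h01, Real.one_rpow]
  | cons k w ih =>
    obtain ⟨⟨hk1, hkn⟩, hw'⟩ := s18valid_cons hw
    obtain ⟨a, b, hcyl, hlen, ha, hb⟩ := s18cyl_struct hw'
    have hLpos := s18L_pos hw'
    have hmeas : MeasurableSet (s18cyl w) := hcyl ▸ measurableSet_Icc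
    have hsub' : s18cyl w ⊆ Set.Icc (0:ℝ) 1 := s18cyl_subset_unit hw'
    have hk : k ∈ Finset.Icc 1 n := Finset.mem_Icc.mpr ⟨hk1, hkn⟩
    have hc := hconf (s18cyl w) hmeas hsub' k hk
    have hgi : (fun x : ℝ => (1 / ((k:ℝ) + 1) - 1 / (k:ℝ)) * x + 1 / (k:ℝ)) '' s18cyl w
        = s18cyl (k :: w) := by rw [s18cyl_cons]; rfl
    rw [hgi, ih hw'] at hc
    rw [hc]
    have hρpos := s18rho_pos hk1
    have hrhoeq : (1 : ℝ) / ((k:ℝ) * ((k:ℝ) + 1)) = s18rho k := rfl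
    rw [hrhoeq, ← ENNReal.ofReal_mul (by positivity), ← Real.mul_rpow (le_of_lt hρpos) (le_of_lt hLpos), s18L_cons]

lemma s18exists_word {n : ℕ} (hn : 2 ≤ n)
    {J : Set ℝ} (hinv : J = ⋃ k ∈ Finset.Icc 1 n, s18g k '' J) :
    ∀ N : ℕ, ∀ r : ℝ, 0 < r → r ≤ 1 → (1/2)^N ≤ r → ∀ x ∈ J,
      ∃ w : List ℕ, s18valid n w ∧ x ∈ s18gW w '' J ∧ s18L w ≤ r ∧ s18rho n * r ≤ s18L w := by
  have hn1 : 1 ≤ n := le_trans (by norm_num) hn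
  have hρn := s18rho_pos hn1
  have hρnh := s18rho_le_half hn1
  intro N
  induction N with
  | zero =>
    intro r hr hr1 hrN x hx
    have : r = 1 := le_antisymm hr1 (by simpa using hrN)
    subst this
    exact ⟨[], fun k hk => by simp at hk, ⟨x, hx, rfl⟩, by simp, by simpa using le_trans hρnh (by norm_num)⟩
  | succ N ih =>
    intro r hr hr1 hrN x hx
    by_cases hrone : 1 ≤ r
    · have : r = 1 := le_antisymm hr1 hrone
      subst this
      exact ⟨[], fun k hk => by simp at hk, ⟨x, hx, rfl⟩, by simp, by simpa using le_trans hρnh (by norm_num)⟩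
    · have hxlt : x ∈ ⋃ k ∈ Finset.Icc 1 n, s18g k '' J := hinv ▸ hx
      simp only [Set.mem_iUnion] at hxlt
      obtain ⟨k, hk, y, hy, hxy⟩ := hxlt
      have hk' := Finset.mem_Icc.mp hk
      have hρk := s18rho_pos hk'.1
      have hρkh := s18rho_le_half hk'.1
      have hρnk : s18rho n ≤ s18rho k := s18rho_anti hk'.1 hk'.2
      by_cases hc : r / s18rho k ≤ 1
      · have hr' : 0 < r / s18rho k := div_pos hr hρk
        have hrN' : (1/2)^N ≤ r / s18rho k := by
          rw [le_div_iff₀ hρk]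
          calc (1/2:ℝ)^N * s18rho k ≤ (1/2)^N * (1/2) := by
                apply mul_le_mul_of_nonneg_left hρkh (by positivity)
            _ = (1/2)^(N+1) := by ring
            _ ≤ r := hrN
        obtain ⟨w, hwv, hwx, hwle, hwge⟩ := ih (r / s18rho k) hr' hc hrN' y hy
        refine ⟨k :: w, ?_, ?_, ?_, ?_⟩
        · intro j hj
          rcases List.mem_cons.mp hj with rfl | hj
          · exact hk'
          · exact hwv j hj
        · obtain ⟨z, hz, hzy⟩ := hwx
          exact ⟨z, hz, by simp only [s18gW, Function.comp_apply, hzy, hxy]⟩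
        · rw [s18L_cons]
          calc s18rho k * s18L w ≤ s18rho k * (r / s18rho k) := by nlinarith
            _ = r := by field_simp
        · rw [s18L_cons]
          calc s18rho n * r = s18rho k * (s18rho n * (r / s18rho k)) := by field_simp
            _ ≤ s18rho k * s18L w := by nlinarith
      · -- r/ρ_k > 1, i.e. ρ_k < r : take the single-letter word [k]
        have hρkr : s18rho k < r := by
          have := not_le.mp hc
          rw [lt_div_iff₀ hρk] at this
          linarith
        refine ⟨[k], ?_, ?_, ?_, ?_⟩
        · intro j hj
          rcases List.mem_cons.mp hj with rfl | hj
          · exact hk'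
          · simp at hj
        · exact ⟨y, hy, by simp only [s18gW, Function.comp_apply, id_eq, hxy]⟩
        · simp only [s18L_cons, s18L_nil, mul_one]
          exact le_of_lt hρkr
        · simp only [s18L_cons, s18L_nil, mul_one]
          calc s18rho n * r ≤ s18rho n * 1 := by nlinarith [not_le.mp hrone]
            _ ≤ s18rho k := by rw [mul_one]; exact hρnk
set_option maxHeartbeats 1000000 in
theorem stmt_18 (n : ℕ) (hn : 2 ≤ n) (h : ℝ) (hh : h ∈ Set.Ioo (0:ℝ) 1)
    (hsum : ∑ k ∈ Finset.Icc 1 n, ((1 / ((k:ℝ) * ((k:ℝ) + 1))) ^ h) = 1)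
    (J : Set ℝ) (hne : J.Nonempty) (hcomp : IsCompact J) (hsub : J ⊆ Set.Icc (0:ℝ) 1)
    (hinv : J = ⋃ k ∈ Finset.Icc 1 n,
      (fun x : ℝ => (1 / ((k:ℝ) + 1) - 1 / (k:ℝ)) * x + 1 / (k:ℝ)) '' J)
    (m : Measure ℝ) [IsProbabilityMeasure m]
    (hsupp : m J = 1)
    (hconf : ∀ A : Set ℝ, MeasurableSet A → A ⊆ Set.Icc (0:ℝ) 1 →
      ∀ k : ℕ, k ∈ Finset.Icc 1 n →
        m ((fun x : ℝ => (1 / ((k:ℝ) + 1) - 1 / (k:ℝ)) * x + 1 / (k:ℝ)) '' A)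
          = ENNReal.ofReal ((1 / ((k:ℝ) * ((k:ℝ) + 1))) ^ h) * m A) :
    ∃ C : ℝ, 0 < C ∧ ∀ x ∈ J, ∀ r : ℝ, 0 < r → r ≤ 1 →
      C⁻¹ * r ^ h ≤ (m (Set.Icc (x - r) (x + r))).toReal ∧
      (m (Set.Icc (x - r) (x + r))).toReal ≤ C * r ^ h := by
  classical
  have hn1 : 1 ≤ n := le_trans (by norm_num) hn
  have hnR : (2:ℝ) ≤ (n:ℝ) := by exact_mod_cast hn
  have hh0 : 0 < h := hh.1
  have hh1 : h < 1 := hh.2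
  have hinv' : J = ⋃ k ∈ Finset.Icc 1 n, s18g k '' J := hinv
  have hmcyl := s18m_cyl hh hsub m hsupp hconf
  set ρ : ℝ := s18rho n with hρdef
  have hρ : 0 < ρ := s18rho_pos hn1
  have hρh : ρ ≤ 1 / 2 := s18rho_le_half hn1
  have hρeq : ρ = 1 / ((n:ℝ) * ((n:ℝ) + 1)) := rfl
  refine ⟨5 * ((n:ℝ) * ((n:ℝ) + 1)), by positivity, ?_⟩
  set C : ℝ := 5 * ((n:ℝ) * ((n:ℝ) + 1)) with hCdef
  have hCpos : 0 < C := by positivity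
  have hCinv : C⁻¹ ≤ ρ := by
    have hnn : (0:ℝ) < (n:ℝ) * ((n:ℝ) + 1) := by positivity
    have h1 : C⁻¹ = 1 / (5 * ((n:ℝ) * ((n:ℝ) + 1))) := by rw [hCdef, one_div]
    rw [h1, hρeq]
    apply div_le_div_of_nonneg_left one_pos.le hnn (by nlinarith)
  have hρ1 : ρ ≤ 1 := le_trans hρh (by norm_num)
  intro x hx r hr hr1
  have hrh : (0:ℝ) < r ^ h := Real.rpow_pos_of_pos hr h
  obtain ⟨N, hN⟩ := exists_pow_lt_of_lt_one hr (by norm_num : (1:ℝ)/2 < 1)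
  have hN' : (1/2:ℝ)^N ≤ r := le_of_lt hN
  constructor
  · -- lower bound
    obtain ⟨w, hwv, hwx, hwle, hwge⟩ := s18exists_word hn hinv' N r hr hr1 hN' x hx
    obtain ⟨a, b, hcyl, hlen, ha, hb⟩ := s18cyl_struct hwv
    have hLpos := s18L_pos hwv
    have hxcyl : x ∈ s18cyl w := by
      obtain ⟨z, hz, hzx⟩ := hwx
      exact ⟨z, hsub hz, hzx⟩
    rw [hcyl] at hxcyl
    have hsubB : s18cyl w ⊆ Set.Icc (x - r) (x + r) := by
      rw [hcyl]
      intro y hy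
      simp only [Set.mem_Icc] at *
      constructor <;> [linarith [hxcyl.1, hxcyl.2, hy.1, hy.2, hwle, hlen];
        linarith [hxcyl.1, hxcyl.2, hy.1, hy.2, hwle, hlen]]
    have hmB : ENNReal.ofReal (s18L w ^ h) ≤ m (Set.Icc (x - r) (x + r)) := by
      rw [← hmcyl w hwv]
      exact measure_mono hsubB
    have htr : s18L w ^ h ≤ (m (Set.Icc (x - r) (x + r))).toReal := by
      have := ENNReal.toReal_mono (measure_ne_top m _) hmB
      rwa [ENNReal.toReal_ofReal (by positivity)] at this
    refine le_trans ?_ htr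
    have h1 : C⁻¹ * r ^ h ≤ ρ * r ^ h := by nlinarith
    have h2 : ρ * r ^ h ≤ ρ ^ h * r ^ h := by
      have : ρ ^ (1:ℝ) ≤ ρ ^ h := Real.rpow_le_rpow_of_exponent_ge hρ hρ1 (le_of_lt hh1)
      rw [Real.rpow_one] at this
      nlinarith
    have h3 : ρ ^ h * r ^ h = (ρ * r) ^ h := (Real.mul_rpow (le_of_lt hρ) (le_of_lt hr)).symm
    have h4 : (ρ * r) ^ h ≤ s18L w ^ h :=
      Real.rpow_le_rpow (by positivity) hwge (le_of_lt hh0)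
    linarith
  · -- upper bound
    set B : Set ℝ := Set.Icc (x - r) (x + r) with hBdef
    set T : Finset (List ℕ) :=
      (s18stop n N r).filter (fun w => (s18cyl w ∩ B).Nonempty) with hTdef
    have hTstop : ∀ w ∈ T, w ∈ s18stop n N r := fun w hw => (Finset.mem_filter.mp hw).1
    have hTvalid : ∀ w ∈ T, s18valid n w := fun w hw => s18stop_valid n N r w (hTstop w hw)
    -- coverage
    have hcover : B ∩ J ⊆ ⋃ w ∈ T, s18cyl w := by
      intro y hy
      have := s18stop_cover hn hsub hinv' N r hr hN' hy.2
      simp only [Set.mem_iUnion] at this ⊢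
      obtain ⟨w, hw, hyw⟩ := this
      exact ⟨w, Finset.mem_filter.mpr ⟨hw, ⟨y, hyw, hy.1⟩⟩, hyw⟩
    -- compl J has measure zero
    have hJc : m Jᶜ = 0 := by
      rw [measure_compl hcomp.measurableSet (measure_ne_top m J), hsupp, measure_univ]
      simp
    -- cardinality bound
    have hLlow : ∀ w ∈ T, ρ * r ≤ s18L w := fun w hw =>
      s18stop_L_lower hn N r hr (by nlinarith) w (hTstop w hw)
    have hLup : ∀ w ∈ T, s18L w ≤ r := fun w hw =>
      s18stop_L_upper hn N r hr hN' hr1 w (hTstop w hw)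
    have hsumvol : ∑ w ∈ T, volume (s18cyl w) = volume (⋃ w ∈ T, s18cyl w) := by
      refine (measure_biUnion_finset₀ ?_ ?_).symm
      · intro w hw v hv hwv
        have hss := s18stop_disj hn N r w (hTstop w hw) v (hTstop v hv) hwv
        exact Set.Subsingleton.measure_zero hss volume
      · intro w hw
        obtain ⟨a, b, hcyl, _, _, _⟩ := s18cyl_struct (hTvalid w hw)
        exact (hcyl ▸ measurableSet_Icc).nullMeasurableSet
    have hUsub : (⋃ w ∈ T, s18cyl w) ⊆ Set.Icc (x - 2*r) (x + 2*r) := by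
      intro y hy
      simp only [Set.mem_iUnion] at hy
      obtain ⟨w, hw, hyw⟩ := hy
      obtain ⟨z, hz1, hz2⟩ := (Finset.mem_filter.mp hw).2
      obtain ⟨a, b, hcyl, hlen, _, _⟩ := s18cyl_struct (hTvalid w hw)
      rw [hcyl] at hyw hz1
      rw [hBdef] at hz2
      simp only [Set.mem_Icc] at *
      have hL := hLup w hw
      constructor <;> [linarith [hyw.1, hyw.2, hz1.1, hz1.2, hz2.1, hz2.2];
        linarith [hyw.1, hyw.2, hz1.1, hz1.2, hz2.1, hz2.2]]
    have hvol : ∑ w ∈ T, s18L w ≤ 4 * r := by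
      have hvr : ∀ w ∈ T, volume (s18cyl w) = ENNReal.ofReal (s18L w) := by
        intro w hw
        obtain ⟨a, b, hcyl, hlen, _, _⟩ := s18cyl_struct (hTvalid w hw)
        rw [hcyl, Real.volume_Icc, hlen]
      have h1 : ∑ w ∈ T, volume (s18cyl w) ≤ ENNReal.ofReal (4 * r) := by
        rw [hsumvol]
        refine le_trans (measure_mono hUsub) ?_
        rw [Real.volume_Icc]
        apply ENNReal.ofReal_le_ofReal
        ring_nf; linarith
      rw [Finset.sum_congr rfl hvr, ← ENNReal.ofReal_sum_of_nonneg
        (fun w hw => le_of_lt (s18L_pos (hTvalid w hw)))] at h1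
      exact (ENNReal.ofReal_le_ofReal_iff (by positivity)).mp h1
    have hcard : (T.card : ℝ) * (ρ * r) ≤ 4 * r := by
      have h0 := Finset.card_nsmul_le_sum T s18L (ρ * r) hLlow
      rw [nsmul_eq_mul] at h0
      exact le_trans h0 hvol
    have hcard' : (T.card : ℝ) ≤ 4 * ((n:ℝ) * ((n:ℝ)+1)) := by
      have hρr : ρ * r > 0 := by positivity
      have h4 : (T.card : ℝ) * ρ ≤ 4 := by
        by_contra hcon
        push_neg at hcon
        nlinarith
      rw [hρeq] at h4
      have hnn : (0:ℝ) < (n:ℝ) * ((n:ℝ)+1) := by positivity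
      rw [mul_one_div, div_le_iff₀ hnn] at h4
      linarith
    -- measure bound
    have hmain : m B ≤ ENNReal.ofReal (C * r ^ h) := by
      have hBsplit : B ⊆ (B ∩ J) ∪ Jᶜ := by
        intro y hy
        by_cases hyJ : y ∈ J
        · exact Or.inl ⟨hy, hyJ⟩
        · exact Or.inr hyJ
      calc m B ≤ m ((B ∩ J) ∪ Jᶜ) := measure_mono hBsplit
        _ ≤ m (B ∩ J) + m Jᶜ := measure_union_le _ _
        _ = m (B ∩ J) := by rw [hJc, add_zero]
        _ ≤ m (⋃ w ∈ T, s18cyl w) := measure_mono hcover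
        _ ≤ ∑ w ∈ T, m (s18cyl w) := measure_biUnion_finset_le T _
        _ = ∑ w ∈ T, ENNReal.ofReal (s18L w ^ h) := by
            exact Finset.sum_congr rfl (fun w hw => hmcyl w (hTvalid w hw))
        _ = ENNReal.ofReal (∑ w ∈ T, s18L w ^ h) :=
            (ENNReal.ofReal_sum_of_nonneg (fun w hw => Real.rpow_nonneg (le_of_lt (s18L_pos (hTvalid w hw))) h)).symm
        _ ≤ ENNReal.ofReal (C * r ^ h) := by
            apply ENNReal.ofReal_le_ofReal
            have hterm : ∀ w ∈ T, s18L w ^ h ≤ r ^ h := fun w hw =>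
              Real.rpow_le_rpow (le_of_lt (s18L_pos (hTvalid w hw))) (hLup w hw) (le_of_lt hh0)
            calc ∑ w ∈ T, s18L w ^ h ≤ T.card • (r ^ h) := Finset.sum_le_card_nsmul T _ _ hterm
              _ = (T.card : ℝ) * r ^ h := nsmul_eq_mul _ _
              _ ≤ C * r ^ h := by rw [hCdef]; nlinarith [hcard', hrh]
    exact ENNReal.toReal_le_of_le_ofReal (by positivity) hmain
end
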